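/- Let A, B be nonempty closed subsets of a Euclidean space X with A ∩ B ≠ ∅, let L be an affine subspace containing A ∪ B, let λ, μ ∈ (0, 2], α > 0, and set η := 1 − α + α(1 − λ)(1 − μ). Then for every c ∈ A ∩ B and every u ∈ (L − L)^⊥: P_A(c + u) = P_B(c + u) = {c} and T(c + u) = {c + ηu}, where T := (1 − α)Id + α P_B^μ P_A^λ is the generalized Douglas–Rachford operator. Consequently A ∩ B ⊆ Fix T, and if (1 − λ)(1 − μ) = 1 then (A ∩ B) + (L − L)^⊥ ⊆ Fix T. -/

import Mathlib

open Pointwise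

/-- The set-valued metric projector onto a set `C`. -/
def projSet {X : Type*} [NormedAddCommGroup X] [InnerProductSpace ℝ X]
    (C : Set X) (x : X) : Set X :=
  {c ∈ C | dist x c = Metric.infDist x C}

/-- The set-valued relaxed projector `P_C^λ`. -/
def rproj {X : Type*} [NormedAddCommGroup X] [InnerProductSpace ℝ X]
    (C : Set X) (lam : ℝ) (x : X) : Set X :=
  (fun c => (1 - lam) • x + lam • c) '' projSet C x

/-- The set-valued generalized Douglas–Rachford operator. -/
def gDR {X : Type*} [NormedAddCommGroup X] [InnerProductSpace ℝ X]
    (A B : Set X) (lam mu alpha : ℝ) (x : X) : Set X :=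
  {y | ∃ r ∈ rproj A lam x, ∃ s ∈ rproj B mu r, y = (1 - alpha) • x + alpha • s}

lemma projSet_perp_eq {X : Type*} [NormedAddCommGroup X] [InnerProductSpace ℝ X]
    (C : Set X) (L : AffineSubspace ℝ X) (hCL : C ⊆ (L : Set X))
    {c u : X} (hc : c ∈ C) (hu : u ∈ L.directionᗮ) :
    projSet C (c + u) = {c} := by
  have key : ∀ a ∈ C, (dist (c + u) a) ^ 2 = ‖u‖ ^ 2 + ‖c - a‖ ^ 2 := by
    intro a ha
    have hmem : c -ᵥ a ∈ L.direction :=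
      AffineSubspace.vsub_mem_direction (hCL hc) (hCL ha)
    have hinner : (inner ℝ u (c - a) : ℝ) = 0 := by
      have := (Submodule.mem_orthogonal L.direction u).1 hu (c - a) hmem
      rwa [real_inner_comm] at this
    have : c + u - a = u + (c - a) := by abel
    rw [dist_eq_norm, this, norm_add_sq_real, hinner]
    ring
  have hdistc : dist (c + u) c = ‖u‖ := by
    simp [dist_eq_norm]
  have hge : ∀ a ∈ C, ‖u‖ ≤ dist (c + u) a := by
    intro a ha
    have h2 : ‖u‖ ^ 2 ≤ (dist (c + u) a) ^ 2 := by
      rw [key a ha]; nlinarith [sq_nonneg ‖c - a‖]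
    have := Real.sqrt_le_sqrt h2
    rwa [Real.sqrt_sq (norm_nonneg _), Real.sqrt_sq dist_nonneg] at this
  have hinf : Metric.infDist (c + u) C = ‖u‖ := by
    apply le_antisymm
    · calc Metric.infDist (c + u) C ≤ dist (c + u) c := Metric.infDist_le_dist_of_mem hc
        _ = ‖u‖ := hdistc
    · by_contra hlt
      push_neg at hlt
      obtain ⟨a, ha, hda⟩ := (Metric.infDist_lt_iff ⟨c, hc⟩).1 hlt
      exact absurd hda (not_lt.2 (hge a ha))
  ext a
  simp only [projSet, Set.mem_setOf_eq, Set.mem_sep_iff, Set.mem_singleton_iff, hinf]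
  constructor
  · rintro ⟨ha, hda⟩
    have h2 : ‖u‖ ^ 2 + ‖c - a‖ ^ 2 = ‖u‖ ^ 2 := by
      rw [← key a ha, hda]
    have : ‖c - a‖ = 0 := by nlinarith [norm_nonneg (c - a)]
    have : c - a = 0 := by simpa using this
    exact (sub_eq_zero.1 this).symm
  · rintro rfl
    exact ⟨hc, hdistc⟩

theorem gDR_fixed_points {X : Type*} [NormedAddCommGroup X] [InnerProductSpace ℝ X]
    [FiniteDimensional ℝ X]
    (A B : Set X) (hAcl : IsClosed A) (hBcl : IsClosed B) (hAB : (A ∩ B).Nonempty)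
    (L : AffineSubspace ℝ X) [Nonempty L] (hABL : A ∪ B ⊆ (L : Set X))
    (lam mu alpha : ℝ) (hlam0 : 0 < lam) (hlam2 : lam ≤ 2)
    (hmu0 : 0 < mu) (hmu2 : mu ≤ 2) (halpha : 0 < alpha)
    (eta : ℝ) (heta : eta = 1 - alpha + alpha * (1 - lam) * (1 - mu)) :
    (∀ c ∈ A ∩ B, ∀ u ∈ (L.directionᗮ : Set X),
        projSet A (c + u) = {c} ∧ projSet B (c + u) = {c} ∧
          gDR A B lam mu alpha (c + u) = {c + eta • u}) ∧
      A ∩ B ⊆ {x | x ∈ gDR A B lam mu alpha x} ∧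
      ((1 - lam) * (1 - mu) = 1 →
        (A ∩ B) + (L.directionᗮ : Set X) ⊆ {x | x ∈ gDR A B lam mu alpha x}) := by
  have hAL : A ⊆ (L : Set X) := (Set.union_subset_iff.1 hABL).1
  have hBL : B ⊆ (L : Set X) := (Set.union_subset_iff.1 hABL).2
  have main : ∀ c ∈ A ∩ B, ∀ u ∈ (L.directionᗮ : Set X),
      projSet A (c + u) = {c} ∧ projSet B (c + u) = {c} ∧
        gDR A B lam mu alpha (c + u) = {c + eta • u} := by
    intro c hc u hu
    have hpA : projSet A (c + u) = {c} := projSet_perp_eq A L hAL hc.1 hu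
    have hpB : projSet B (c + u) = {c} := projSet_perp_eq B L hBL hc.2 hu
    have hu' : (1 - lam) • u ∈ L.directionᗮ := Submodule.smul_mem _ _ hu
    have hpB' : projSet B (c + (1 - lam) • u) = {c} := projSet_perp_eq B L hBL hc.2 hu'
    refine ⟨hpA, hpB, ?_⟩
    have hrA : rproj A lam (c + u) = {c + (1 - lam) • u} := by
      rw [rproj, hpA, Set.image_singleton]
      congr 1
      rw [smul_add]
      module
    have hrB : rproj B mu (c + (1 - lam) • u) = {c + (1 - mu) • (1 - lam) • u} := by
      rw [rproj, hpB', Set.image_singleton]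
      congr 1
      rw [smul_add]
      module
    ext y
    simp only [gDR, Set.mem_setOf_eq, hrA, Set.mem_singleton_iff]
    constructor
    · rintro ⟨r, rfl, s, hs, rfl⟩
      rw [hrB, Set.mem_singleton_iff] at hs
      subst hs
      rw [heta]
      module
    · rintro rfl
      refine ⟨_, rfl, c + (1 - mu) • (1 - lam) • u, by rw [hrB]; rfl, ?_⟩
      rw [heta]
      module
  refine ⟨main, ?_, ?_⟩
  · intro c hc
    have h := (main c hc 0 (Submodule.zero_mem _)).2.2
    simp only [add_zero, smul_zero] at h
    simp [Set.mem_setOf_eq, h]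
  · intro h1 x hx
    rw [Set.mem_add] at hx
    obtain ⟨c, hc, u, hu, rfl⟩ := hx
    have heta1 : eta = 1 := by rw [heta, mul_assoc, h1, mul_one]; ring
    have h := (main c hc u hu).2.2
    rw [heta1, one_smul] at h
    simp [Set.mem_setOf_eq, h]
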